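/- arXiv:1411.1323 — 2 statements merged into one kernel-verified Lean document; each statement's English description precedes it below -/
import Mathlib

section
/- Let A, P ∈ M_m(ℝ) with P symmetric positive definite satisfying A P + P Aᵀ + B Bᵀ = 0, and suppose λ is an eigenvalue of Aᵀ with eigenvector γ ∈ ℂ^m such that Bᵀγ ≠ 0. Then Re(λ) < 0. -/
open Matrix

lemma mulVec_star_comm {m n : ℕ} (M : Matrix (Fin m) (Fin n) ℝ) (v : Fin n → ℂ) :
    (M.map Complex.ofReal) *ᵥ (star v) = star ((M.map Complex.ofReal) *ᵥ v) := by
  funext i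
  simp [mulVec, dotProduct, map_sum]

lemma re_dot_pos {m : ℕ} {P : Matrix (Fin m) (Fin m) ℝ} (hP : P.PosDef)
    {x : Fin m → ℂ} (hx : x ≠ 0) :
    0 < (star x ⬝ᵥ ((P.map Complex.ofReal) *ᵥ x)).re := by
  set a : Fin m → ℝ := fun i => (x i).re with ha
  set b : Fin m → ℝ := fun i => (x i).im with hb
  have key : (star x ⬝ᵥ ((P.map Complex.ofReal) *ᵥ x)).re
      = a ⬝ᵥ (P *ᵥ a) + b ⬝ᵥ (P *ᵥ b) := by
    simp only [dotProduct, mulVec, Pi.star_apply, map_apply, Complex.re_sum,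
      Finset.mul_sum, Complex.mul_re, Complex.im_sum, Complex.mul_im, Complex.ofReal_re,
      Complex.ofReal_im, RCLike.star_def, Complex.conj_re, Complex.conj_im]
    rw [← Finset.sum_add_distrib]
    refine Finset.sum_congr rfl fun i _ => ?_
    rw [← Finset.sum_add_distrib]
    refine Finset.sum_congr rfl fun j _ => ?_
    ring
  rw [key]
  have hab : a ≠ 0 ∨ b ≠ 0 := by
    by_contra h; push_neg at h
    apply hx; funext i
    exact Complex.ext (by simpa using congrFun h.1 i) (by simpa using congrFun h.2 i)
  rcases hab with h | h
  · have h1 := hP.dotProduct_mulVec_pos h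
    rw [star_trivial] at h1
    have h2 : 0 ≤ b ⬝ᵥ (P *ᵥ b) := by
      have := hP.posSemidef.dotProduct_mulVec_nonneg b; rwa [star_trivial] at this
    linarith
  · have h1 := hP.dotProduct_mulVec_pos h
    rw [star_trivial] at h1
    have h2 : 0 ≤ a ⬝ᵥ (P *ᵥ a) := by
      have := hP.posSemidef.dotProduct_mulVec_nonneg a; rwa [star_trivial] at this
    linarith

theorem lyapunov_eigenvalue_re_neg
    {m k : ℕ} (A P : Matrix (Fin m) (Fin m) ℝ) (B : Matrix (Fin m) (Fin k) ℝ)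
    (hPsymm : P.IsSymm) (hP : P.PosDef)
    (hLyap : A * P + P * Aᵀ + B * Bᵀ = 0)
    (lam : ℂ) (γ : Fin m → ℂ) (hγ : γ ≠ 0)
    (heig : (Aᵀ.map (Complex.ofReal)) *ᵥ γ = lam • γ)
    (hBγ : (Bᵀ.map (Complex.ofReal)) *ᵥ γ ≠ 0) :
    lam.re < 0 := by
  have hmap : (A.map Complex.ofReal) * (P.map Complex.ofReal)
      + (P.map Complex.ofReal) * (Aᵀ.map Complex.ofReal)
      + (B.map Complex.ofReal) * (Bᵀ.map Complex.ofReal) = 0 := by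
    have h := congrArg (fun M => M.map (Complex.ofRealHom : ℝ →+* ℂ).toFun) hLyap
    simp [Matrix.map_add, Matrix.map_mul] at h
    exact h
  set c0 : ℂ := star γ ⬝ᵥ ((P.map Complex.ofReal) *ᵥ γ) with hc0
  set w : Fin k → ℂ := (Bᵀ.map Complex.ofReal) *ᵥ γ with hw
  have hAstar : (Aᵀ.map Complex.ofReal) *ᵥ star γ = (starRingEnd ℂ) lam • star γ := by
    rw [mulVec_star_comm, heig, star_smul]; rfl
  have h1 : star γ ⬝ᵥ (((P.map Complex.ofReal) * (Aᵀ.map Complex.ofReal)) *ᵥ γ)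
      = lam * c0 := by
    rw [← mulVec_mulVec, heig, mulVec_smul, dotProduct_smul, smul_eq_mul]
  have h2 : star γ ⬝ᵥ (((A.map Complex.ofReal) * (P.map Complex.ofReal)) *ᵥ γ)
      = (starRingEnd ℂ) lam * c0 := by
    rw [← mulVec_mulVec, dotProduct_mulVec, ← mulVec_transpose, ← Matrix.transpose_map,
      hAstar, smul_dotProduct, smul_eq_mul]
  have h3 : star γ ⬝ᵥ (((B.map Complex.ofReal) * (Bᵀ.map Complex.ofReal)) *ᵥ γ)
      = star w ⬝ᵥ w := by
    rw [← mulVec_mulVec, dotProduct_mulVec, ← mulVec_transpose, ← Matrix.transpose_map,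
      mulVec_star_comm, hw]
  have hsum : (starRingEnd ℂ) lam * c0 + lam * c0 + star w ⬝ᵥ w = 0 := by
    have h := congrArg (fun M => star γ ⬝ᵥ (M *ᵥ γ)) hmap
    simpa [add_mulVec, dotProduct_add, h1, h2, h3] using h
  have hre : 2 * lam.re * c0.re + (star w ⬝ᵥ w).re = 0 := by
    have := congrArg Complex.re hsum
    simp only [Complex.add_re, Complex.mul_re, Complex.zero_re, Complex.conj_re,
      Complex.conj_im] at this
    ring_nf at this ⊢
    linarith
  have hs : 0 < (star w ⬝ᵥ w).re := by
    have : (star w ⬝ᵥ w).re = ∑ i, Complex.normSq (w i) := by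
      simp [dotProduct, Complex.re_sum, Complex.normSq_apply, Complex.mul_re]
    rw [this]
    obtain ⟨i, hi⟩ := Function.ne_iff.mp hBγ
    exact Finset.sum_pos' (fun j _ => Complex.normSq_nonneg _)
      ⟨i, Finset.mem_univ i, Complex.normSq_pos.mpr hi⟩
  have hc : 0 < c0.re := re_dot_pos hP hγ
  nlinarith
end

section
/- Let φ, ρ : ℝⁿ × ℝⁿ × ℝ → (0,∞) be C² with φ satisfying the backward equation ∂φ/∂t + v·∇_xφ + (−βv − (1/m)∇V)·∇_vφ + (σ²/2)Δ_vφ = 0, and ρ satisfying the controlled Fokker–Planck equation ∂ρ/∂t + v·∇_xρ + ∇_v·[(−βv − (1/m)∇V + σ²∇_v log φ)ρ] − (σ²/2)Δ_vρ = 0. Then φ̂ := ρ/φ satisfies the uncontrolled Fokker–Planck equation ∂φ̂/∂t + v·∇_x φ̂ + ∇_v·[(−βv − (1/m)∇V)φ̂] − (σ²/2)Δ_v φ̂ = 0. -/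
lemma cd2_diff {f : ℝ → ℝ} (hf : ContDiff ℝ 2 f) : Differentiable ℝ f :=
  hf.differentiable (by norm_num)

lemma cd2_deriv_diff {f : ℝ → ℝ} (hf : ContDiff ℝ 2 f) : Differentiable ℝ (deriv f) := by
  rw [show (2 : WithTop ℕ∞) = 1 + 1 by norm_num, contDiff_succ_iff_deriv] at hf
  exact hf.2.2.differentiable one_ne_zero

lemma iteratedDeriv_two' (f : ℝ → ℝ) (s : ℝ) : iteratedDeriv 2 f s = deriv (deriv f) s := by
  rw [show (2:ℕ) = 1 + 1 from rfl, iteratedDeriv_succ, iteratedDeriv_one]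

lemma deriv_affine_aux (β c s : ℝ) : deriv (fun u : ℝ => -β * u - c) s = -β := by
  rw [deriv_fun_sub (by fun_prop) (by fun_prop), deriv_const]
  simpa only [deriv_id'', mul_one, sub_zero] using deriv_const_mul_field (v := fun u : ℝ => u) (x := s) (-β)

lemma deriv_affine_mul (β c s : ℝ) (g : ℝ → ℝ) (hg : DifferentiableAt ℝ g s) :
    deriv (fun u => (-β * u - c) * g u) s = -β * g s + (-β * s - c) * deriv g s := by
  rw [deriv_fun_mul (by fun_prop) hg, deriv_affine_aux]

lemma second_quot (f h : ℝ → ℝ) (hf : ContDiff ℝ 2 f) (hh : ContDiff ℝ 2 h)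
    (hfpos : ∀ u, 0 < f u) (s : ℝ) :
    iteratedDeriv 2 (fun u => h u / f u) s
      = iteratedDeriv 2 h s / f s - 2 * (deriv f s * deriv h s) / (f s)^2
        - h s * iteratedDeriv 2 f s / (f s)^2 + 2 * h s * (deriv f s)^2 / (f s)^3 := by
  have hfd := cd2_diff hf; have hhd := cd2_diff hh
  have hfd2 := cd2_deriv_diff hf; have hhd2 := cd2_deriv_diff hh
  rw [iteratedDeriv_two', iteratedDeriv_two', iteratedDeriv_two']
  have hq : deriv (fun u => h u / f u) = fun u => (deriv h u * f u - h u * deriv f u)/(f u)^2 := by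
    funext u; exact deriv_div (hhd u) (hfd u) (hfpos u).ne'
  rw [hq]
  have hN : DifferentiableAt ℝ (fun u => deriv h u * f u - h u * deriv f u) s :=
    ((hhd2 s).mul (hfd s)).sub ((hhd s).mul (hfd2 s))
  have hD : DifferentiableAt ℝ (fun u => (f u)^2) s := (hfd s).pow 2
  rw [deriv_fun_div hN hD (pow_ne_zero 2 (hfpos s).ne'),
      deriv_fun_sub ((hhd2 s).fun_mul (hfd s)) ((hhd s).fun_mul (hfd2 s)),
      deriv_fun_mul (hhd2 s) (hfd s), deriv_fun_mul (hhd s) (hfd2 s)]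
  have hD' : deriv (fun u => (f u)^2) s = 2 * f s * deriv f s := by
    rw [deriv_fun_pow (hfd s) 2]; ring
  rw [hD']
  have h0 : f s ≠ 0 := (hfpos s).ne'
  field_simp
  ring

lemma deriv_control_mul (β c σ2 s : ℝ) (f h : ℝ → ℝ) (hf : ContDiff ℝ 2 f)
    (hh : ContDiff ℝ 2 h) (hfpos : ∀ u, 0 < f u) :
    deriv (fun u => (-β * u - c + σ2 * deriv (fun w => Real.log (f w)) u) * h u) s
      = (-β + σ2 * (iteratedDeriv 2 f s * f s - (deriv f s)^2) / (f s)^2) * h s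
        + (-β * s - c + σ2 * deriv f s / f s) * deriv h s := by
  have hfd := cd2_diff hf; have hhd := cd2_diff hh
  have hfd2 := cd2_deriv_diff hf
  have hlog : ∀ u, deriv (fun w => Real.log (f w)) u = deriv f u / f u := fun u =>
    deriv.log (hfd u) (hfpos u).ne'
  simp only [hlog]
  have hA : DifferentiableAt ℝ (fun u : ℝ => -β * u - c) s := by fun_prop
  have hq : DifferentiableAt ℝ (fun u => deriv f u / f u) s :=
    (hfd2 s).div (hfd s) (hfpos s).ne'
  have hB : DifferentiableAt ℝ (fun u => σ2 * (deriv f u / f u)) s := hq.const_mul _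
  rw [deriv_fun_mul (hA.fun_add hB) (hhd s), deriv_fun_add hA hB, deriv_const_mul _ hq,
      deriv_fun_div (hfd2 s) (hfd s) (hfpos s).ne', deriv_affine_aux, iteratedDeriv_two']
  have h0 : f s ≠ 0 := (hfpos s).ne'
  field_simp

section slices
variable {n : ℕ} {g : (Fin n → ℝ) → (Fin n → ℝ) → ℝ → ℝ}

lemma sliceT (hg : ContDiff ℝ 2 (fun p : (Fin n → ℝ) × (Fin n → ℝ) × ℝ => g p.1 p.2.1 p.2.2))
    (x v : Fin n → ℝ) : ContDiff ℝ 2 (fun s => g x v s) :=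
  hg.comp (contDiff_const.prodMk (contDiff_const.prodMk contDiff_id))

lemma sliceX (hg : ContDiff ℝ 2 (fun p : (Fin n → ℝ) × (Fin n → ℝ) × ℝ => g p.1 p.2.1 p.2.2))
    (x v : Fin n → ℝ) (t : ℝ) (i : Fin n) :
    ContDiff ℝ 2 (fun s => g (Function.update x i s) v t) :=
  hg.comp ((contDiff_update 2 x i).prodMk (contDiff_const.prodMk contDiff_const))

lemma sliceV (hg : ContDiff ℝ 2 (fun p : (Fin n → ℝ) × (Fin n → ℝ) × ℝ => g p.1 p.2.1 p.2.2))
    (x v : Fin n → ℝ) (t : ℝ) (i : Fin n) :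
    ContDiff ℝ 2 (fun s => g x (Function.update v i s) t) :=
  hg.comp (contDiff_const.prodMk ((contDiff_update 2 v i).prodMk contDiff_const))

end slices

noncomputable def partialT {n : ℕ} (φ : (Fin n → ℝ) → (Fin n → ℝ) → ℝ → ℝ)
    (x v : Fin n → ℝ) (t : ℝ) : ℝ :=
  deriv (fun s => φ x v s) t

noncomputable def partialX {n : ℕ} (φ : (Fin n → ℝ) → (Fin n → ℝ) → ℝ → ℝ)
    (x v : Fin n → ℝ) (t : ℝ) (i : Fin n) : ℝ :=
  deriv (fun s => φ (Function.update x i s) v t) (x i)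

noncomputable def partialV {n : ℕ} (φ : (Fin n → ℝ) → (Fin n → ℝ) → ℝ → ℝ)
    (x v : Fin n → ℝ) (t : ℝ) (i : Fin n) : ℝ :=
  deriv (fun s => φ x (Function.update v i s) t) (v i)

noncomputable def laplacianV {n : ℕ} (φ : (Fin n → ℝ) → (Fin n → ℝ) → ℝ → ℝ)
    (x v : Fin n → ℝ) (t : ℝ) : ℝ :=
  ∑ i, iteratedDeriv 2 (fun s => φ x (Function.update v i s) t) (v i)

noncomputable def divV {n : ℕ} (F : (Fin n → ℝ) → (Fin n → ℝ) → ℝ → Fin n → ℝ)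
    (x v : Fin n → ℝ) (t : ℝ) : ℝ :=
  ∑ i, deriv (fun s => F x (Function.update v i s) t i) (v i)

theorem quotient_satisfies_uncontrolled_FokkerPlanck
    {n : ℕ} (β m σ : ℝ) (hβ : 0 < β) (hm : 0 < m) (hσ : 0 < σ)
    (V : (Fin n → ℝ) → ℝ) (hV : ContDiff ℝ 2 V)
    (φ ρ : (Fin n → ℝ) → (Fin n → ℝ) → ℝ → ℝ)
    (hφsmooth : ContDiff ℝ 2 (fun p : (Fin n → ℝ) × (Fin n → ℝ) × ℝ => φ p.1 p.2.1 p.2.2))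
    (hρsmooth : ContDiff ℝ 2 (fun p : (Fin n → ℝ) × (Fin n → ℝ) × ℝ => ρ p.1 p.2.1 p.2.2))
    (hφpos : ∀ x v t, 0 < φ x v t) (hρpos : ∀ x v t, 0 < ρ x v t)
    (hbackward : ∀ x v t, partialT φ x v t +
      (∑ i, v i * partialX φ x v t i) +
      (∑ i, (-β * v i - (1 / m) * partialX (fun x _ _ => V x) x v t i) * partialV φ x v t i) +
      (σ ^ 2 / 2) * laplacianV φ x v t = 0)
    (hFP : ∀ x v t, partialT ρ x v t +
      (∑ i, v i * partialX ρ x v t i) +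
      divV (fun x v t i =>
        (-β * v i - (1 / m) * partialX (fun x _ _ => V x) x v t i +
          σ ^ 2 * partialV (fun x v t => Real.log (φ x v t)) x v t i) * ρ x v t) x v t -
      (σ ^ 2 / 2) * laplacianV ρ x v t = 0) :
    ∀ x v t, partialT (fun x v t => ρ x v t / φ x v t) x v t +
      (∑ i, v i * partialX (fun x v t => ρ x v t / φ x v t) x v t i) +
      divV (fun x v t i =>
        (-β * v i - (1 / m) * partialX (fun x _ _ => V x) x v t i) *
          (ρ x v t / φ x v t)) x v t -
      (σ ^ 2 / 2) * laplacianV (fun x v t => ρ x v t / φ x v t) x v t = 0 := by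
  intro x v t
  have hB := hbackward x v t
  have hF := hFP x v t
  simp only [partialT, partialX, partialV, divV, laplacianV, Function.update_idem,
    Function.update_self] at hB hF ⊢
  have hΦ : φ x v t ≠ 0 := (hφpos x v t).ne'
  -- differentiability facts
  have hφT := cd2_diff (sliceT hφsmooth x v)
  have hρT := cd2_diff (sliceT hρsmooth x v)
  -- G1 : time part
  have G1 : deriv (fun s => ρ x v s / φ x v s) t
      = (1 / φ x v t) * deriv (fun s => ρ x v s) t
        - (ρ x v t / (φ x v t)^2) * deriv (fun s => φ x v s) t := by
    rw [deriv_fun_div (hρT t) (hφT t) hΦ]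
    field_simp
  -- G2 : x-transport part
  have G2 : (∑ i : Fin n, v i * deriv
        (fun s => ρ (Function.update x i s) v t / φ (Function.update x i s) v t) (x i))
      = (1 / φ x v t) * (∑ i : Fin n, v i * deriv (fun s => ρ (Function.update x i s) v t) (x i))
        - (ρ x v t / (φ x v t)^2) *
            (∑ i : Fin n, v i * deriv (fun s => φ (Function.update x i s) v t) (x i)) := by
    have e : ∀ i ∈ Finset.univ, v i * deriv
        (fun s => ρ (Function.update x i s) v t / φ (Function.update x i s) v t) (x i)
        = (1 / φ x v t) * (v i * deriv (fun s => ρ (Function.update x i s) v t) (x i))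
          - (ρ x v t / (φ x v t)^2) *
              (v i * deriv (fun s => φ (Function.update x i s) v t) (x i)) := by
      intro i _
      rw [deriv_fun_div (cd2_diff (sliceX hρsmooth x v t i) (x i))
        (cd2_diff (sliceX hφsmooth x v t i) (x i))
        (by simp only [Function.update_eq_self]; exact hΦ)]
      simp only [Function.update_eq_self]
      field_simp
      try ring
    rw [Finset.sum_congr rfl e]
    simp only [Finset.sum_add_distrib, Finset.sum_sub_distrib, ← Finset.mul_sum,
      Finset.sum_const, Finset.card_univ, Fintype.card_fin, nsmul_eq_mul]
    try ring
  -- G3 : drift divergence part of the goal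
  have G3 : (∑ i : Fin n, deriv
        (fun s => (-β * s - 1 / m * deriv (fun s => V (Function.update x i s)) (x i)) *
          (ρ x (Function.update v i s) t / φ x (Function.update v i s) t)) (v i))
      = (n : ℝ) * (-β * (ρ x v t / φ x v t))
        + (1 / φ x v t) * (∑ i : Fin n,
            (-β * v i - 1 / m * deriv (fun s => V (Function.update x i s)) (x i)) *
              deriv (fun s => ρ x (Function.update v i s) t) (v i))
        - (ρ x v t / (φ x v t)^2) * (∑ i : Fin n,
            (-β * v i - 1 / m * deriv (fun s => V (Function.update x i s)) (x i)) *
              deriv (fun s => φ x (Function.update v i s) t) (v i)) := by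
    have e : ∀ i ∈ Finset.univ, deriv
        (fun s => (-β * s - 1 / m * deriv (fun s => V (Function.update x i s)) (x i)) *
          (ρ x (Function.update v i s) t / φ x (Function.update v i s) t)) (v i)
        = -β * (ρ x v t / φ x v t)
          + (1 / φ x v t) *
              ((-β * v i - 1 / m * deriv (fun s => V (Function.update x i s)) (x i)) *
                deriv (fun s => ρ x (Function.update v i s) t) (v i))
          - (ρ x v t / (φ x v t)^2) *
              ((-β * v i - 1 / m * deriv (fun s => V (Function.update x i s)) (x i)) *
                deriv (fun s => φ x (Function.update v i s) t) (v i)) := by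
      intro i _
      rw [deriv_affine_mul β (1 / m * deriv (fun s => V (Function.update x i s)) (x i)) (v i)
        _ ((cd2_diff (sliceV hρsmooth x v t i) (v i)).fun_div
            (cd2_diff (sliceV hφsmooth x v t i) (v i))
            (by simp only [Function.update_eq_self]; exact hΦ)),
        deriv_fun_div (cd2_diff (sliceV hρsmooth x v t i) (v i))
          (cd2_diff (sliceV hφsmooth x v t i) (v i))
          (by simp only [Function.update_eq_self]; exact hΦ)]
      simp only [Function.update_eq_self]
      field_simp
      try ring
    rw [Finset.sum_congr rfl e]
    simp only [Finset.sum_add_distrib, Finset.sum_sub_distrib, ← Finset.mul_sum,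
      Finset.sum_const, Finset.card_univ, Fintype.card_fin, nsmul_eq_mul]
    try ring
  -- G4 : Laplacian of the quotient
  have G4 : (∑ i : Fin n, iteratedDeriv 2
        (fun s => ρ x (Function.update v i s) t / φ x (Function.update v i s) t) (v i))
      = (1 / φ x v t) * (∑ i : Fin n,
            iteratedDeriv 2 (fun s => ρ x (Function.update v i s) t) (v i))
        - (2 / (φ x v t)^2) * (∑ i : Fin n,
            deriv (fun s => φ x (Function.update v i s) t) (v i) *
              deriv (fun s => ρ x (Function.update v i s) t) (v i))
        - (ρ x v t / (φ x v t)^2) * (∑ i : Fin n,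
            iteratedDeriv 2 (fun s => φ x (Function.update v i s) t) (v i))
        + (2 * ρ x v t / (φ x v t)^3) * (∑ i : Fin n,
            (deriv (fun s => φ x (Function.update v i s) t) (v i))^2) := by
    have e : ∀ i ∈ Finset.univ, iteratedDeriv 2
        (fun s => ρ x (Function.update v i s) t / φ x (Function.update v i s) t) (v i)
        = (1 / φ x v t) * iteratedDeriv 2 (fun s => ρ x (Function.update v i s) t) (v i)
          - (2 / (φ x v t)^2) * (deriv (fun s => φ x (Function.update v i s) t) (v i) *
              deriv (fun s => ρ x (Function.update v i s) t) (v i))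
          - (ρ x v t / (φ x v t)^2) *
              iteratedDeriv 2 (fun s => φ x (Function.update v i s) t) (v i)
          + (2 * ρ x v t / (φ x v t)^3) *
              (deriv (fun s => φ x (Function.update v i s) t) (v i))^2 := by
      intro i _
      rw [second_quot (fun s => φ x (Function.update v i s) t)
        (fun s => ρ x (Function.update v i s) t) (sliceV hφsmooth x v t i)
        (sliceV hρsmooth x v t i) (fun u => hφpos _ _ _) (v i)]
      simp only [Function.update_eq_self]
      field_simp
      try ring
    rw [Finset.sum_congr rfl e]
    simp only [Finset.sum_add_distrib, Finset.sum_sub_distrib, ← Finset.mul_sum,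
      Finset.sum_const, Finset.card_univ, Fintype.card_fin, nsmul_eq_mul]
    try ring
  -- HF : controlled divergence term in hF
  have HF : (∑ i : Fin n, deriv
        (fun s => (-β * s - 1 / m * deriv (fun s => V (Function.update x i s)) (x i) +
          σ ^ 2 * deriv (fun s => Real.log (φ x (Function.update v i s) t)) s) *
            ρ x (Function.update v i s) t) (v i))
      = (n : ℝ) * (-β * ρ x v t)
        + (σ ^ 2 * ρ x v t / φ x v t) * (∑ i : Fin n,
            iteratedDeriv 2 (fun s => φ x (Function.update v i s) t) (v i))
        - (σ ^ 2 * ρ x v t / (φ x v t)^2) * (∑ i : Fin n,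
            (deriv (fun s => φ x (Function.update v i s) t) (v i))^2)
        + (∑ i : Fin n,
            (-β * v i - 1 / m * deriv (fun s => V (Function.update x i s)) (x i)) *
              deriv (fun s => ρ x (Function.update v i s) t) (v i))
        + (σ ^ 2 / φ x v t) * (∑ i : Fin n,
            deriv (fun s => φ x (Function.update v i s) t) (v i) *
              deriv (fun s => ρ x (Function.update v i s) t) (v i)) := by
    have e : ∀ i ∈ Finset.univ, deriv
        (fun s => (-β * s - 1 / m * deriv (fun s => V (Function.update x i s)) (x i) +
          σ ^ 2 * deriv (fun s => Real.log (φ x (Function.update v i s) t)) s) *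
            ρ x (Function.update v i s) t) (v i)
        = -β * ρ x v t
          + (σ ^ 2 * ρ x v t / φ x v t) *
              iteratedDeriv 2 (fun s => φ x (Function.update v i s) t) (v i)
          - (σ ^ 2 * ρ x v t / (φ x v t)^2) *
              (deriv (fun s => φ x (Function.update v i s) t) (v i))^2
          + (-β * v i - 1 / m * deriv (fun s => V (Function.update x i s)) (x i)) *
              deriv (fun s => ρ x (Function.update v i s) t) (v i)
          + (σ ^ 2 / φ x v t) *
              (deriv (fun s => φ x (Function.update v i s) t) (v i) *
                deriv (fun s => ρ x (Function.update v i s) t) (v i)) := by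
      intro i _
      rw [deriv_control_mul β (1 / m * deriv (fun s => V (Function.update x i s)) (x i))
        (σ ^ 2) (v i) (fun s => φ x (Function.update v i s) t)
        (fun s => ρ x (Function.update v i s) t) (sliceV hφsmooth x v t i)
        (sliceV hρsmooth x v t i) (fun u => hφpos _ _ _)]
      simp only [Function.update_eq_self]
      field_simp
      try ring
    rw [Finset.sum_congr rfl e]
    simp only [Finset.sum_add_distrib, Finset.sum_sub_distrib, ← Finset.mul_sum,
      Finset.sum_const, Finset.card_univ, Fintype.card_fin, nsmul_eq_mul]
    try ring
  rw [G1, G2, G3, G4]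
  rw [HF] at hF
  linear_combination (1 / φ x v t) * hF - (ρ x v t / (φ x v t)^2) * hB
end
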